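/- Limit point property: let p, w ∈ AP₊(ℝ,ℝ) and q : ℝ → ℝ Bohr almost periodic, and let z ∈ ℂ. If φ₁ and φ₂ are solutions of −(pφ')' + qφ = z·w·φ with ∫₀^{+∞} |φᵢ(x)|²·w(x) dx < ∞ for i = 1, 2, then φ₁ and φ₂ are linearly dependent over ℂ. Similarly, any two solutions that are square integrable with weight w on (−∞, 0] are linearly dependent. -/

import Mathlib

open Filter Topology MeasureTheory Set

noncomputable section

/-- A continuous function `f : ℝ → E` is Bohr almost periodic if every sequence of reals
has a subsequence along which the translates converge uniformly on `ℝ`. -/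
def BohrAP {E : Type*} [NormedAddCommGroup E] (f : ℝ → E) : Prop :=
  Continuous f ∧ ∀ t : ℕ → ℝ, ∃ (s : ℕ → ℕ) (g : ℝ → E),
    StrictMono s ∧ TendstoUniformly (fun n x => f (x + t (s n))) g atTop

/-- The hull of `f`: uniform limits of sequences of translates of `f`. -/
def Hull {E : Type*} [NormedAddCommGroup E] (f : ℝ → E) : Set (ℝ → E) :=
  {g | ∃ t : ℕ → ℝ, TendstoUniformly (fun n x => f (x + t n)) g atTop}

/-- `AP₊(ℝ,ℝ)`: Bohr almost periodic functions all of whose hull elements are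
strictly positive at every point. -/
def APplus (f : ℝ → ℝ) : Prop :=
  BohrAP f ∧ ∀ g ∈ Hull f, ∀ x : ℝ, 0 < g x

/-- The set of Fourier exponents of `f`: those `l` for which the Fourier coefficient
`lim_{T→∞} (1/T) ∫₀^T f(x) e^{-i l x} dx` is nonzero (encoded as: the averages do not
tend to `0`; for Bohr almost periodic `f` the limit always exists). -/
def freqSet (f : ℝ → ℝ) : Set ℝ :=
  {l : ℝ | ¬ Tendsto
      (fun T : ℝ => (T : ℂ)⁻¹ *
        ∫ x in (0:ℝ)..T, (f x : ℂ) * Complex.exp (-(Complex.I * (l : ℂ) * (x : ℂ))))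
      atTop (𝓝 0)}

/-- The frequency module of `f`: the smallest additive subgroup of `ℝ` containing the
Fourier exponents of `f`. -/
def freqModule (f : ℝ → ℝ) : AddSubgroup ℝ := AddSubgroup.closure (freqSet f)

/-- `θ` solves the Prüfer equation `θ' = a cos²θ + (λ w - q) sin²θ`. -/
def IsPruefer (a q w : ℝ → ℝ) (lam : ℝ) (θ : ℝ → ℝ) : Prop :=
  ∀ x : ℝ, HasDerivAt θ
    (a x * Real.cos (θ x) ^ 2 + (lam * w x - q x) * Real.sin (θ x) ^ 2) x

/-- `φ` is a (real) solution of the Sturm–Liouville equation `-(pφ')' + qφ = λ w φ`: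
`φ` is `C¹`, `pφ'` is `C¹`, and the equation holds everywhere. -/
def IsSLSolution (p q w : ℝ → ℝ) (lam : ℝ) (φ : ℝ → ℝ) : Prop :=
  ContDiff ℝ 1 φ ∧ ContDiff ℝ 1 (fun x => p x * deriv φ x) ∧
    ∀ x : ℝ, -(deriv (fun y => p y * deriv φ y) x) + q x * φ x = lam * w x * φ x

/-- `φ : ℝ → ℂ` is a solution of `-(pφ')' + qφ = z w φ`. -/
def IsSLSolutionC (p q w : ℝ → ℝ) (z : ℂ) (φ : ℝ → ℂ) : Prop :=
  ContDiff ℝ 1 φ ∧ ContDiff ℝ 1 (fun x => (p x : ℂ) * deriv φ x) ∧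
    ∀ x : ℝ, -(deriv (fun y => (p y : ℂ) * deriv φ y) x) + (q x : ℂ) * φ x = z * (w x : ℂ) * φ x



lemma BohrAP.bounded {E : Type*} [NormedAddCommGroup E] {f : ℝ → E} (hf : BohrAP f) :
    ∃ C : ℝ, ∀ x, ‖f x‖ ≤ C := by
  by_contra h
  push_neg at h
  choose t ht using fun n : ℕ => h n
  obtain ⟨s, g, hs, hu⟩ := hf.2 t
  have h1 : Tendsto (fun n => f (0 + t (s n))) atTop (𝓝 (g 0)) :=
    hu.tendsto_at 0
  have h2 : Tendsto (fun n => ‖f (0 + t (s n))‖) atTop atTop := by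
    apply tendsto_atTop_mono (f := fun n : ℕ => (n : ℝ))
    · intro n
      simp only [zero_add]
      exact le_trans (by exact_mod_cast hs.id_le n) (le_of_lt (ht (s n)))
    · exact tendsto_natCast_atTop_atTop
  exact not_tendsto_atTop_of_tendsto_nhds h1.norm h2

lemma APplus.pos_lb {f : ℝ → ℝ} (hf : APplus f) : ∃ b : ℝ, 0 < b ∧ ∀ x, b ≤ f x := by
  have hself : f ∈ Hull f := by
    refine ⟨fun _ => 0, ?_⟩
    have : (fun (n : ℕ) (x : ℝ) => f (x + 0)) = fun (n : ℕ) x => f x := by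
      funext n x; rw [add_zero]
    rw [this]
    exact fun u hu => Eventually.of_forall fun n x => refl_mem_uniformity hu
  have hfpos : ∀ x, 0 < f x := hf.2 f hself
  by_contra h
  push_neg at h
  have h' : ∀ n : ℕ, ∃ x, f x < 1 / (n + 1) := fun n => h (1 / (n + 1)) (by positivity)
  choose t ht using h'
  obtain ⟨s, g, hs, hu⟩ := (hf.1).2 t
  have hg : g ∈ Hull f := ⟨fun n => t (s n), hu⟩
  have h1 : Tendsto (fun n => f (0 + t (s n))) atTop (𝓝 (g 0)) := hu.tendsto_at 0
  have h2 : Tendsto (fun n => f (0 + t (s n))) atTop (𝓝 0) := by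
    apply tendsto_of_tendsto_of_tendsto_of_le_of_le (g := fun _ => (0:ℝ))
      (h := fun n : ℕ => 1 / ((n:ℝ) + 1)) tendsto_const_nhds
      tendsto_one_div_add_atTop_nhds_zero_nat
    · intro n; simp only [zero_add]; exact le_of_lt (hfpos _)
    · intro n
      simp only [zero_add]
      refine le_trans (le_of_lt (ht (s n))) ?_
      apply one_div_le_one_div_of_le (by positivity)
      have := hs.id_le n
      push_cast
      linarith [(by exact_mod_cast this : (n:ℝ) ≤ s n)]
  have : g 0 = 0 := tendsto_nhds_unique h1 h2
  exact absurd (hf.2 g hg 0) (by rw [this]; exact lt_irrefl 0)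

lemma normSq_eq_sq (ζ : ℂ) : Complex.normSq ζ = ‖ζ‖ ^ 2 := by
  rw [Complex.normSq_eq_norm_sq]

namespace SLH

variable {p q w : ℝ → ℝ} {z : ℂ} {φ : ℝ → ℂ}

lemma hd (h : IsSLSolutionC p q w z φ) : ∀ x, HasDerivAt φ (deriv φ x) x :=
  fun x => (h.1.differentiable one_ne_zero x).hasDerivAt

lemma hPd (h : IsSLSolutionC p q w z φ) :
    ∀ x, HasDerivAt (fun y => (p y : ℂ) * deriv φ y) ((q x - z * w x) * φ x) x := by
  intro x
  have h1 : HasDerivAt (fun y => (p y : ℂ) * deriv φ y)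
      (deriv (fun y => (p y : ℂ) * deriv φ y) x) x :=
    (h.2.1.differentiable one_ne_zero x).hasDerivAt
  have h2 : deriv (fun y => (p y : ℂ) * deriv φ y) x = (q x - z * w x) * φ x := by
    have := h.2.2 x
    linear_combination -this
  rwa [h2] at h1

lemma cont (h : IsSLSolutionC p q w z φ) : Continuous φ := h.1.continuous

lemma cont_deriv (h : IsSLSolutionC p q w z φ) : Continuous (deriv φ) :=
  h.1.continuous_deriv le_rfl

lemma sol_sq_integrable {b : ℝ} (hb : 0 < b) (hwb : ∀ x, b ≤ w x)
    (h : IsSLSolutionC p q w z φ)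
    (hint : IntegrableOn (fun x => ‖φ x‖ ^ 2 * w x) (Ici 0)) :
    IntegrableOn (fun x => Complex.normSq (φ x)) (Ici 0) := by
  have hnsc : Continuous fun x => Complex.normSq (φ x) :=
    Complex.continuous_normSq.comp (cont h)
  apply Integrable.mono' (hint.const_mul b⁻¹) hnsc.aestronglyMeasurable
  refine Eventually.of_forall fun x => ?_
  rw [Real.norm_of_nonneg (Complex.normSq_nonneg _), normSq_eq_sq]
  have h1 : b * ‖φ x‖ ^ 2 ≤ ‖φ x‖ ^ 2 * w x := by nlinarith [hwb x, sq_nonneg ‖φ x‖]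
  calc ‖φ x‖ ^ 2 = b⁻¹ * (b * ‖φ x‖ ^ 2) := by field_simp
    _ ≤ b⁻¹ * (‖φ x‖ ^ 2 * w x) := mul_le_mul_of_nonneg_left h1 (le_of_lt (inv_pos.2 hb))

lemma sol_sq_interval_bounded {b : ℝ} (hb : 0 < b) (hwb : ∀ x, b ≤ w x)
    (h : IsSLSolutionC p q w z φ)
    (hint : IntegrableOn (fun x => ‖φ x‖ ^ 2 * w x) (Ici 0)) :
    ∃ C : ℝ, 0 ≤ C ∧ ∀ x : ℝ, 0 ≤ x → (∫ t in (0:ℝ)..x, Complex.normSq (φ t)) ≤ C := by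
  have hI := sol_sq_integrable hb hwb h hint
  refine ⟨∫ t in Ici (0:ℝ), Complex.normSq (φ t),
    setIntegral_nonneg measurableSet_Ici (fun t _ => Complex.normSq_nonneg _),
    fun x hx => ?_⟩
  rw [intervalIntegral.integral_of_le hx]
  apply setIntegral_mono_set hI
  · exact Eventually.of_forall fun t => Complex.normSq_nonneg _
  · exact HasSubset.Subset.eventuallyLE (fun t ht => le_of_lt ht.1)

/-- Key a priori estimate: for a solution which is `L²` with weight `w` on `[0,∞)`,
the integrals `∫_0^x ‖φ'‖²` are uniformly bounded. -/
lemma deriv_sq_integral_bounded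
    (hpc : Continuous p) (hqc : Continuous q) (hwc : Continuous w)
    {a A b B Q : ℝ} (ha : 0 < a) (hb : 0 < b)
    (hpa : ∀ x, a ≤ p x) (hpA : ∀ x, p x ≤ A) (hwb : ∀ x, b ≤ w x) (hwB : ∀ x, w x ≤ B)
    (hQ : ∀ x, |q x| ≤ Q) (h : IsSLSolutionC p q w z φ)
    (hint : IntegrableOn (fun x => ‖φ x‖ ^ 2 * w x) (Ici 0)) :
    ∃ C : ℝ, ∀ x : ℝ, 0 ≤ x → (∫ t in (0:ℝ)..x, Complex.normSq (deriv φ t)) ≤ C := by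
  have hφc := cont h
  have hφ'c := cont_deriv h
  have hnsc : Continuous fun x => Complex.normSq (φ x) := Complex.continuous_normSq.comp hφc
  have hns'c : Continuous fun x => Complex.normSq (deriv φ x) :=
    Complex.continuous_normSq.comp hφ'c
  -- integrability of ‖φ‖² on [0,∞)
  have intU : IntegrableOn (fun x => Complex.normSq (φ x)) (Ici 0) := by
    apply Integrable.mono' (hint.const_mul b⁻¹) hnsc.aestronglyMeasurable
    refine Eventually.of_forall fun x => ?_
    rw [Real.norm_of_nonneg (Complex.normSq_nonneg _), normSq_eq_sq]
    have h1 : b * ‖φ x‖ ^ 2 ≤ ‖φ x‖ ^ 2 * w x := by nlinarith [hwb x, sq_nonneg ‖φ x‖]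
    calc ‖φ x‖ ^ 2 = b⁻¹ * (b * ‖φ x‖ ^ 2) := by field_simp
      _ ≤ b⁻¹ * (‖φ x‖ ^ 2 * w x) := by
          exact mul_le_mul_of_nonneg_left h1 (le_of_lt (inv_pos.2 hb))
  -- the function G and its derivative
  set G : ℝ → ℝ := fun x => ((starRingEnd ℂ) (φ x) * ((p x : ℂ) * deriv φ x)).re with hGdef
  set g₂ : ℝ → ℝ := fun t => p t * Complex.normSq (deriv φ t) with hg2def
  set r : ℝ → ℝ := fun t => (q t - z.re * w t) * Complex.normSq (φ t) with hrdef
  have hg2c : Continuous g₂ := hpc.mul hns'c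
  have hrc : Continuous r := (hqc.sub (continuous_const.mul hwc)).mul hnsc
  have hg2nn : ∀ t, 0 ≤ g₂ t := fun t =>
    mul_nonneg (le_trans (le_of_lt ha) (hpa t)) (Complex.normSq_nonneg _)
  have hGd : ∀ x, HasDerivAt G (g₂ x + r x) x := by
    intro x
    have hstar : HasDerivAt (fun y => (starRingEnd ℂ) (φ y)) ((starRingEnd ℂ) (deriv φ x)) x :=
      (hd h x).star
    have h1 := hstar.mul (hPd h x)
    have h2 := (Complex.reCLM.hasFDerivAt).comp_hasDerivAt x h1
    have he : Complex.reCLM ((starRingEnd ℂ) (deriv φ x) * ((p x : ℂ) * deriv φ x) +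
        (starRingEnd ℂ) (φ x) * ((q x - z * w x) * φ x)) = g₂ x + r x := by
      have e1 : (starRingEnd ℂ) (deriv φ x) * ((p x : ℂ) * deriv φ x)
          = (p x : ℂ) * ((Complex.normSq (deriv φ x) : ℝ) : ℂ) := by
        rw [← Complex.mul_conj (deriv φ x)]; ring
      have e2 : (starRingEnd ℂ) (φ x) * ((q x - z * w x) * φ x)
          = ((q x : ℂ) - z * w x) * ((Complex.normSq (φ x) : ℝ) : ℂ) := by
        rw [← Complex.mul_conj (φ x)]; ring
      rw [e1, e2]
      simp [Complex.add_re, Complex.mul_re, Complex.sub_re, Complex.sub_im, hg2def, hrdef]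
    rw [he] at h2
    exact h2
  -- FTC
  have hFTC : ∀ x : ℝ, (∫ t in (0:ℝ)..x, g₂ t) + (∫ t in (0:ℝ)..x, r t) = G x - G 0 := by
    intro x
    rw [← intervalIntegral.integral_add (hg2c.intervalIntegrable 0 x)
      (hrc.intervalIntegrable 0 x)]
    exact intervalIntegral.integral_eq_sub_of_hasDerivAt (fun t _ => hGd t)
      ((hg2c.add hrc).intervalIntegrable 0 x)
  set F : ℝ → ℝ := fun x => ∫ t in (0:ℝ)..x, g₂ t with hFdef
  -- the r-integrals are uniformly bounded for x ≥ 0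
  have hr_int : IntegrableOn r (Ici 0) := by
    apply Integrable.mono' (intU.const_mul (Q + |z.re| * B)) hrc.aestronglyMeasurable
    refine Eventually.of_forall fun x => ?_
    rw [hrdef]
    simp only [Real.norm_eq_abs, abs_mul, abs_of_nonneg (Complex.normSq_nonneg (φ x))]
    apply mul_le_mul_of_nonneg_right _ (Complex.normSq_nonneg _)
    calc |q x - z.re * w x| ≤ |q x| + |z.re| * |w x| := by
          refine le_trans (abs_sub _ _) ?_
          rw [abs_mul]
      _ ≤ Q + |z.re| * B := by
          have : |w x| = w x := abs_of_nonneg (le_trans (le_of_lt hb) (hwb x))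
          rw [this]
          exact add_le_add (hQ x) (mul_le_mul_of_nonneg_left (hwB x) (abs_nonneg _))
  set C₁ : ℝ := ∫ t in Ici (0:ℝ), |r t| with hC₁def
  have hr_bound : ∀ x : ℝ, 0 ≤ x → |∫ t in (0:ℝ)..x, r t| ≤ C₁ := by
    intro x hx
    refine le_trans (intervalIntegral.abs_integral_le_integral_abs hx) ?_
    rw [intervalIntegral.integral_of_le hx]
    apply setIntegral_mono_set hr_int.abs
    · exact Eventually.of_forall fun t => abs_nonneg _
    · exact HasSubset.Subset.eventuallyLE (fun t ht => le_of_lt ht.1)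
  -- F is bounded above
  have hFbdd : ∃ C, ∀ x, F x ≤ C := by
    by_contra hC
    push_neg at hC
    have hFmono : Monotone F := by
      intro x y hxy
      have hsplit : F x + ∫ t in x..y, g₂ t = F y :=
        intervalIntegral.integral_add_adjacent_intervals (hg2c.intervalIntegrable 0 x)
          (hg2c.intervalIntegrable x y)
      have hnn : 0 ≤ ∫ t in x..y, g₂ t :=
        intervalIntegral.integral_nonneg hxy (fun t _ => hg2nn t)
      linarith
    have hFtop : Tendsto F atTop atTop := by
      apply tendsto_atTop_atTop_of_monotone' hFmono
      rintro ⟨C, hC2⟩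
      obtain ⟨x, hx⟩ := hC C
      exact absurd (hC2 (mem_range_self x)) (not_le.2 hx)
    have hGtop : Tendsto G atTop atTop := by
      apply tendsto_atTop_mono' atTop (f₁ := fun x => F x + (G 0 - C₁))
      · filter_upwards [eventually_ge_atTop (0:ℝ)] with x hx
        have h1 := hFTC x
        have h2 := (abs_le.1 (hr_bound x hx)).1
        linarith
      · exact tendsto_atTop_add_const_right atTop _ hFtop
    -- D = ‖φ‖² has large derivative eventually, contradicting integrability
    obtain ⟨x₁, hx₁⟩ := (hGtop.eventually_ge_atTop A).exists_forall_of_atTop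
    set D : ℝ → ℝ := fun x => Complex.normSq (φ x) with hDdef
    have hDd : ∀ x, HasDerivAt D
        (2 * ((φ x).re * (deriv φ x).re + (φ x).im * (deriv φ x).im)) x := by
      intro x
      have hre : HasDerivAt (fun y => (φ y).re) ((deriv φ x).re) x :=
        (Complex.reCLM.hasFDerivAt).comp_hasDerivAt x (hd h x)
      have him : HasDerivAt (fun y => (φ y).im) ((deriv φ x).im) x :=
        (Complex.imCLM.hasFDerivAt).comp_hasDerivAt x (hd h x)
      have hsum : HasDerivAt (fun y => (φ y).re * (φ y).re + (φ y).im * (φ y).im) _ x :=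
        (hre.mul hre).add (him.mul him)
      have he : (fun y => (φ y).re * (φ y).re + (φ y).im * (φ y).im) = D := by
        funext y
        show _ = Complex.normSq (φ y)
        rw [Complex.normSq_apply]
      rw [he] at hsum
      convert hsum using 1
      ring
    have hrel : ∀ x, p x * (2 * ((φ x).re * (deriv φ x).re + (φ x).im * (deriv φ x).im))
        = 2 * G x := by
      intro x
      rw [hGdef]
      simp [Complex.mul_re, Complex.mul_im]
      ring
    have hD'ge : ∀ x, x₁ ≤ x →
        1 ≤ 2 * ((φ x).re * (deriv φ x).re + (φ x).im * (deriv φ x).im) := by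
      intro x hx
      have h1 := hx₁ x hx
      have h2 := hrel x
      have h3 := hpa x
      have h4 := hpA x
      nlinarith
    have hD'c : Continuous fun x =>
        2 * ((φ x).re * (deriv φ x).re + (φ x).im * (deriv φ x).im) := by
      apply continuous_const.mul
      exact ((Complex.continuous_re.comp hφc).mul (Complex.continuous_re.comp hφ'c)).add
        ((Complex.continuous_im.comp hφc).mul (Complex.continuous_im.comp hφ'c))
    have hDgrow : ∀ x, x₁ ≤ x → x - x₁ ≤ D x := by
      intro x hx
      have hftc : ∫ t in x₁..x, 2 * ((φ t).re * (deriv φ t).re + (φ t).im * (deriv φ t).im)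
          = D x - D x₁ :=
        intervalIntegral.integral_eq_sub_of_hasDerivAt (fun t _ => hDd t)
          (hD'c.intervalIntegrable x₁ x)
      have hmono : ∫ t in x₁..x, (1:ℝ) ≤
          ∫ t in x₁..x, 2 * ((φ t).re * (deriv φ t).re + (φ t).im * (deriv φ t).im) := by
        apply intervalIntegral.integral_mono_on hx (intervalIntegrable_const)
          (hD'c.intervalIntegrable x₁ x)
        intro t ht
        exact hD'ge t ht.1
      rw [intervalIntegral.integral_const, smul_eq_mul, mul_one] at hmono
      have hD0 : 0 ≤ D x₁ := Complex.normSq_nonneg _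
      linarith
    -- contradiction with integrability of D
    set M : ℝ := max x₁ 0 + 1 with hMdef
    have hmax0 : (0:ℝ) ≤ max x₁ 0 := le_max_right _ _
    have hmax1 : x₁ ≤ max x₁ 0 := le_max_left _ _
    have hM0 : (0:ℝ) ≤ M := by rw [hMdef]; linarith
    have hint2 : IntegrableOn D (Ici M) := intU.mono_set (Ici_subset_Ici.2 hM0)
    have hone : IntegrableOn (fun _ : ℝ => (1:ℝ)) (Ici M) := by
      apply Integrable.mono' hint2 aestronglyMeasurable_const
      rw [ae_restrict_iff' measurableSet_Ici]
      refine Eventually.of_forall fun x hx => ?_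
      rw [norm_one]
      have h1 : x₁ + 1 ≤ x := by
        have : M ≤ x := hx
        rw [hMdef] at this
        linarith
      have h2 := hDgrow x (by linarith)
      linarith
    rw [integrableOn_const_iff] at hone
    rcases hone with hone | hone
    · exact absurd hone (by simp)
    · rw [Real.volume_Ici] at hone
      exact absurd hone (by simp)
  obtain ⟨C, hc⟩ := hFbdd
  refine ⟨a⁻¹ * C, fun x hx => ?_⟩
  have h1 : (∫ t in (0:ℝ)..x, Complex.normSq (deriv φ t)) ≤ ∫ t in (0:ℝ)..x, a⁻¹ * g₂ t := by
    apply intervalIntegral.integral_mono_on hx (hns'c.intervalIntegrable 0 x)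
      ((continuous_const.mul hg2c).intervalIntegrable 0 x)
    intro t _
    rw [hg2def]
    have h2 := hpa t
    have h3 := Complex.normSq_nonneg (deriv φ t)
    show Complex.normSq (deriv φ t) ≤ a⁻¹ * (p t * Complex.normSq (deriv φ t))
    rw [show a⁻¹ * (p t * Complex.normSq (deriv φ t))
        = (a⁻¹ * p t) * Complex.normSq (deriv φ t) by ring]
    nth_rewrite 1 [show Complex.normSq (deriv φ t) = 1 * Complex.normSq (deriv φ t) by ring]
    apply mul_le_mul_of_nonneg_right _ h3
    rw [show (1:ℝ) = a⁻¹ * a by field_simp]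
    exact mul_le_mul_of_nonneg_left h2 (le_of_lt (inv_pos.2 ha))
  calc (∫ t in (0:ℝ)..x, Complex.normSq (deriv φ t)) ≤ ∫ t in (0:ℝ)..x, a⁻¹ * g₂ t := h1
    _ = a⁻¹ * F x := by rw [intervalIntegral.integral_const_mul]
    _ ≤ a⁻¹ * C := mul_le_mul_of_nonneg_left (hc x) (le_of_lt (inv_pos.2 ha))

lemma wronskian_const (h₁ : IsSLSolutionC p q w z φ) {φ₂ : ℝ → ℂ}
    (h₂ : IsSLSolutionC p q w z φ₂) :
    ∀ x, φ x * ((p x : ℂ) * deriv φ₂ x) - φ₂ x * ((p x : ℂ) * deriv φ x)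
       = φ 0 * ((p 0 : ℂ) * deriv φ₂ 0) - φ₂ 0 * ((p 0 : ℂ) * deriv φ 0) := by
  have hW : ∀ x, HasDerivAt
      (fun x => φ x * ((p x : ℂ) * deriv φ₂ x) - φ₂ x * ((p x : ℂ) * deriv φ x)) 0 x := by
    intro x
    have h0 := ((hd h₁ x).mul (hPd h₂ x)).sub ((hd h₂ x).mul (hPd h₁ x))
    have he : deriv φ x * ((p x : ℂ) * deriv φ₂ x) + φ x * ((q x - z * w x) * φ₂ x) -
        (deriv φ₂ x * ((p x : ℂ) * deriv φ x) + φ₂ x * ((q x - z * w x) * φ x)) = 0 := by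
      ring
    rwa [he] at h0
  intro x
  exact is_const_of_deriv_eq_zero (fun x => (hW x).differentiableAt) (fun x => (hW x).deriv) x 0

/-- Forward uniqueness for a first-order linear 2x2 system with bounded coefficients. -/
lemma ode_forward_zero (pc qc : ℝ → ℂ) (K : ℝ) (hK1 : ∀ x, ‖pc x‖ ≤ K)
    (hK2 : ∀ x, ‖qc x‖ ≤ K) (ψ P : ℝ → ℂ)
    (hψ : ∀ x, HasDerivAt ψ (pc x * P x) x)
    (hP : ∀ x, HasDerivAt P (qc x * ψ x) x)
    (x₀ : ℝ) (h0 : ψ x₀ = 0) (hP0 : P x₀ = 0) :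
    ∀ x, x₀ ≤ x → ψ x = 0 := by
  intro b hb
  set f : ℝ → ℂ × ℂ := fun x => (ψ x, P x) with hf_def
  have hfd : ∀ x, HasDerivAt f (pc x * P x, qc x * ψ x) x := fun x => (hψ x).prodMk (hP x)
  have hfc : Continuous f := by
    apply Continuous.prodMk
    · exact continuous_iff_continuousAt.2 fun x => (hψ x).continuousAt
    · exact continuous_iff_continuousAt.2 fun x => (hP x).continuousAt
  have key : ∀ x ∈ Icc x₀ b, ‖f x‖ ≤ gronwallBound 0 K 0 (x - x₀) := by
    apply norm_le_gronwallBound_of_norm_deriv_right_le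
      (f' := fun x => (pc x * P x, qc x * ψ x)) hfc.continuousOn
      (fun x _ => (hfd x).hasDerivWithinAt)
    · simp [hf_def, h0, hP0]
    · intro x _
      rw [Prod.norm_def]
      rw [add_zero]
      have h1 : ‖pc x * P x‖ ≤ K * ‖f x‖ := by
        rw [norm_mul]
        calc ‖pc x‖ * ‖P x‖ ≤ K * ‖P x‖ :=
              mul_le_mul_of_nonneg_right (hK1 x) (norm_nonneg _)
          _ ≤ K * ‖f x‖ := by
              apply mul_le_mul_of_nonneg_left _ (le_trans (norm_nonneg _) (hK1 x))
              rw [Prod.norm_def]; exact le_max_right _ _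
      have h2 : ‖qc x * ψ x‖ ≤ K * ‖f x‖ := by
        rw [norm_mul]
        calc ‖qc x‖ * ‖ψ x‖ ≤ K * ‖ψ x‖ :=
              mul_le_mul_of_nonneg_right (hK2 x) (norm_nonneg _)
          _ ≤ K * ‖f x‖ := by
              apply mul_le_mul_of_nonneg_left _ (le_trans (norm_nonneg _) (hK1 x))
              rw [Prod.norm_def]; exact le_max_left _ _
      exact max_le h1 h2
  have := key b ⟨hb, le_rfl⟩
  rw [gronwallBound_ε0] at this
  simp only [zero_mul] at this
  have : ‖f b‖ ≤ 0 := this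
  have : f b = 0 := by
    have := norm_le_zero_iff.mp this
    exact this
  exact congrArg Prod.fst this

lemma ode_zero (pc qc : ℝ → ℂ) (K : ℝ) (hK1 : ∀ x, ‖pc x‖ ≤ K)
    (hK2 : ∀ x, ‖qc x‖ ≤ K) (ψ P : ℝ → ℂ)
    (hψ : ∀ x, HasDerivAt ψ (pc x * P x) x)
    (hP : ∀ x, HasDerivAt P (qc x * ψ x) x)
    (x₀ : ℝ) (h0 : ψ x₀ = 0) (hP0 : P x₀ = 0) :
    ∀ x, ψ x = 0 := by
  intro x
  rcases le_or_gt x₀ x with hx | hx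
  · exact ode_forward_zero pc qc K hK1 hK2 ψ P hψ hP x₀ h0 hP0 x hx
  · have hneg : ∀ y : ℝ, HasDerivAt (fun t : ℝ => 2 * x₀ - t) (-1 : ℝ) y := by
      intro y
      simpa using ((hasDerivAt_id y).const_sub (2 * x₀))
    have hψ' : ∀ y, HasDerivAt (fun t => ψ (2 * x₀ - t))
        ((-(pc (2 * x₀ - y))) * P (2 * x₀ - y)) y := by
      intro y
      have := (hψ (2 * x₀ - y)).scomp y (hneg y)
      simpa [neg_one_smul, neg_mul, Function.comp_def] using this
    have hP' : ∀ y, HasDerivAt (fun t => P (2 * x₀ - t))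
        ((-(qc (2 * x₀ - y))) * ψ (2 * x₀ - y)) y := by
      intro y
      have := (hP (2 * x₀ - y)).scomp y (hneg y)
      simpa [neg_one_smul, neg_mul, Function.comp_def] using this
    have := ode_forward_zero (fun y => -(pc (2 * x₀ - y))) (fun y => -(qc (2 * x₀ - y))) K
      (fun y => by simpa using hK1 (2 * x₀ - y)) (fun y => by simpa using hK2 (2 * x₀ - y))
      (fun t => ψ (2 * x₀ - t)) (fun t => P (2 * x₀ - t)) hψ' hP' x₀
      (by show ψ _ = 0; rw [show 2 * x₀ - x₀ = x₀ by ring]; exact h0) (by show P _ = 0; rw [show 2 * x₀ - x₀ = x₀ by ring]; exact hP0) (2 * x₀ - x) (by linarith)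
    simpa using this

lemma half_line
    (hpc : Continuous p) (hqc : Continuous q) (hwc : Continuous w)
    {a A b B Q : ℝ} (ha : 0 < a) (hb : 0 < b)
    (hpa : ∀ x, a ≤ p x) (hpA : ∀ x, p x ≤ A) (hwb : ∀ x, b ≤ w x) (hwB : ∀ x, w x ≤ B)
    (hQ : ∀ x, |q x| ≤ Q) {φ₂ : ℝ → ℂ}
    (h₁ : IsSLSolutionC p q w z φ) (h₂ : IsSLSolutionC p q w z φ₂)
    (hint₁ : IntegrableOn (fun x => ‖φ x‖ ^ 2 * w x) (Ici 0))
    (hint₂ : IntegrableOn (fun x => ‖φ₂ x‖ ^ 2 * w x) (Ici 0)) :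
    ∃ c₁ c₂ : ℂ, ¬(c₁ = 0 ∧ c₂ = 0) ∧ ∀ x : ℝ, c₁ * φ x + c₂ * φ₂ x = 0 := by
  have hp0 : ∀ x, (0:ℝ) < p x := fun x => lt_of_lt_of_le ha (hpa x)
  have hpz : ∀ x, ((p x : ℂ)) ≠ 0 := fun x => Complex.ofReal_ne_zero.2 (ne_of_gt (hp0 x))
  -- the (constant) Wronskian
  set c : ℂ := φ 0 * ((p 0 : ℂ) * deriv φ₂ 0) - φ₂ 0 * ((p 0 : ℂ) * deriv φ 0) with hcdef
  have hWx := wronskian_const h₁ h₂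
  -- Step 1 : c = 0
  have hczero : c = 0 := by
    by_contra hc
    obtain ⟨U₁, hU₁0, hU₁⟩ := sol_sq_interval_bounded hb hwb h₁ hint₁
    obtain ⟨U₂, hU₂0, hU₂⟩ := sol_sq_interval_bounded hb hwb h₂ hint₂
    obtain ⟨V₁, hV₁⟩ := deriv_sq_integral_bounded hpc hqc hwc ha hb hpa hpA hwb hwB hQ h₁ hint₁
    obtain ⟨V₂, hV₂⟩ := deriv_sq_integral_bounded hpc hqc hwc ha hb hpa hpA hwb hwB hQ h₂ hint₂
    have hV₁0 : 0 ≤ V₁ := le_trans (by simp) (hV₁ 0 le_rfl)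
    have hV₂0 : 0 ≤ V₂ := le_trans (by simp) (hV₂ 0 le_rfl)
    set M : ℝ := (U₁ + U₂ + V₁ + V₂) / 2 with hMdef
    have hM0 : 0 ≤ M := by rw [hMdef]; linarith
    -- pointwise identity for the integrand
    have hpt : ∀ t : ℝ, φ t * deriv φ₂ t - φ₂ t * deriv φ t = c * ((p t : ℂ))⁻¹ := by
      intro t
      have h1 : (p t : ℂ) * (φ t * deriv φ₂ t - φ₂ t * deriv φ t) = c := by
        rw [hcdef]; linear_combination hWx t
      rw [← h1, mul_comm ((p t : ℂ)), mul_assoc, mul_inv_cancel₀ (hpz t), mul_one]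
    -- the integral of the Wronskian over [0,x]
    set x : ℝ := A * (M + 1) / ‖c‖ with hxdef
    have hcnorm : 0 < ‖c‖ := norm_pos_iff.2 hc
    have hA0 : 0 < A := lt_of_lt_of_le ha (hpa 0) |>.trans_le (hpA 0)
    have hx0 : 0 ≤ x := by
      rw [hxdef]; positivity
    -- lower bound
    have hIc : (∫ t in (0:ℝ)..x, (φ t * deriv φ₂ t - φ₂ t * deriv φ t))
        = c * ((∫ t in (0:ℝ)..x, (p t)⁻¹ : ℝ) : ℂ) := by
      rw [show (fun t => φ t * deriv φ₂ t - φ₂ t * deriv φ t)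
          = fun t => c * (((p t)⁻¹ : ℝ) : ℂ) from funext fun t => by
            rw [hpt t, Complex.ofReal_inv]]
      rw [intervalIntegral.integral_const_mul, intervalIntegral.integral_ofReal]
    have hplow : x / A ≤ ∫ t in (0:ℝ)..x, (p t)⁻¹ := by
      have h1 : ∫ t in (0:ℝ)..x, (A⁻¹ : ℝ) ≤ ∫ t in (0:ℝ)..x, (p t)⁻¹ := by
        apply intervalIntegral.integral_mono_on hx0 intervalIntegrable_const
          ((hpc.inv₀ (fun t => ne_of_gt (hp0 t))).intervalIntegrable 0 x)
        intro t _
        exact inv_anti₀ (hp0 t) (hpA t)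
      rw [intervalIntegral.integral_const, smul_eq_mul] at h1
      calc x / A = x * A⁻¹ := div_eq_mul_inv x A
        _ ≤ _ := by
            have : (x - 0) * A⁻¹ = x * A⁻¹ := by ring
            linarith [h1]
    have hlow : ‖c‖ * (x / A) ≤ ‖(∫ t in (0:ℝ)..x, (φ t * deriv φ₂ t - φ₂ t * deriv φ t))‖ := by
      rw [hIc, norm_mul, Complex.norm_real, Real.norm_eq_abs]
      apply mul_le_mul_of_nonneg_left _ (norm_nonneg c)
      exact le_trans hplow (le_abs_self _)
    -- upper bound
    have hup : ‖(∫ t in (0:ℝ)..x, (φ t * deriv φ₂ t - φ₂ t * deriv φ t))‖ ≤ M := by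
      have hcont : Continuous fun t => φ t * deriv φ₂ t - φ₂ t * deriv φ t :=
        ((cont h₁).mul (cont_deriv h₂)).sub ((cont h₂).mul (cont_deriv h₁))
      have hc1 : Continuous fun t => Complex.normSq (φ t) :=
        Complex.continuous_normSq.comp (cont h₁)
      have hc2 : Continuous fun t => Complex.normSq (deriv φ₂ t) :=
        Complex.continuous_normSq.comp (cont_deriv h₂)
      have hc3 : Continuous fun t => Complex.normSq (φ₂ t) :=
        Complex.continuous_normSq.comp (cont h₂)
      have hc4 : Continuous fun t => Complex.normSq (deriv φ t) :=
        Complex.continuous_normSq.comp (cont_deriv h₁)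
      have hb1 : ‖(∫ t in (0:ℝ)..x, (φ t * deriv φ₂ t - φ₂ t * deriv φ t))‖
          ≤ ∫ t in (0:ℝ)..x, ‖φ t * deriv φ₂ t - φ₂ t * deriv φ t‖ :=
        intervalIntegral.norm_integral_le_integral_norm hx0
      have hb2 : ∫ t in (0:ℝ)..x, ‖φ t * deriv φ₂ t - φ₂ t * deriv φ t‖
          ≤ ∫ t in (0:ℝ)..x, (Complex.normSq (φ t) + Complex.normSq (deriv φ₂ t)
            + Complex.normSq (φ₂ t) + Complex.normSq (deriv φ t)) / 2 := by
        apply intervalIntegral.integral_mono_on hx0 (hcont.norm.intervalIntegrable 0 x)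
          (((((hc1.add hc2).add hc3).add hc4).div_const 2).intervalIntegrable 0 x)
        intro t _
        have e1 : ‖φ t * deriv φ₂ t - φ₂ t * deriv φ t‖
            ≤ ‖φ t‖ * ‖deriv φ₂ t‖ + ‖φ₂ t‖ * ‖deriv φ t‖ := by
          refine le_trans (norm_sub_le _ _) ?_
          rw [norm_mul, norm_mul]
        have e2 : ‖φ t‖ * ‖deriv φ₂ t‖ ≤ (‖φ t‖^2 + ‖deriv φ₂ t‖^2) / 2 := by nlinarith [sq_nonneg (‖φ t‖ - ‖deriv φ₂ t‖)]
        have e3 : ‖φ₂ t‖ * ‖deriv φ t‖ ≤ (‖φ₂ t‖^2 + ‖deriv φ t‖^2) / 2 := by nlinarith [sq_nonneg (‖φ₂ t‖ - ‖deriv φ t‖)]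
        show ‖φ t * deriv φ₂ t - φ₂ t * deriv φ t‖ ≤ (Complex.normSq (φ t) + Complex.normSq (deriv φ₂ t)
            + Complex.normSq (φ₂ t) + Complex.normSq (deriv φ t)) / 2
        rw [normSq_eq_sq, normSq_eq_sq, normSq_eq_sq, normSq_eq_sq]
        linarith
      have hb3 : ∫ t in (0:ℝ)..x, (Complex.normSq (φ t) + Complex.normSq (deriv φ₂ t)
            + Complex.normSq (φ₂ t) + Complex.normSq (deriv φ t)) / 2 ≤ M := by
        have hsplit : ∫ t in (0:ℝ)..x, (Complex.normSq (φ t) + Complex.normSq (deriv φ₂ t)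
            + Complex.normSq (φ₂ t) + Complex.normSq (deriv φ t)) / 2
            = ((∫ t in (0:ℝ)..x, Complex.normSq (φ t)) + (∫ t in (0:ℝ)..x, Complex.normSq (deriv φ₂ t))
            + (∫ t in (0:ℝ)..x, Complex.normSq (φ₂ t)) + (∫ t in (0:ℝ)..x, Complex.normSq (deriv φ t))) / 2 := by
          rw [← intervalIntegral.integral_add (hc1.intervalIntegrable 0 x)
              (hc2.intervalIntegrable 0 x),
            ← intervalIntegral.integral_add
              (f := fun t => Complex.normSq (φ t) + Complex.normSq (deriv φ₂ t))
              ((hc1.add hc2).intervalIntegrable 0 x)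
              (hc3.intervalIntegrable 0 x),
            ← intervalIntegral.integral_add
              (f := fun t => Complex.normSq (φ t) + Complex.normSq (deriv φ₂ t)
                + Complex.normSq (φ₂ t))
              (((hc1.add hc2).add hc3).intervalIntegrable 0 x)
              (hc4.intervalIntegrable 0 x),
            ← intervalIntegral.integral_div]
        rw [hsplit, hMdef]
        have b1 := hU₁ x hx0
        have b2 := hU₂ x hx0
        have b3 := hV₁ x hx0
        have b4 := hV₂ x hx0
        linarith
      linarith
    -- combine
    have hfinal : ‖c‖ * (x / A) ≤ M := le_trans hlow hup
    have hx' : x / A = (M + 1) / ‖c‖ := by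
      rw [hxdef, div_right_comm, mul_div_cancel_left₀ _ (ne_of_gt hA0)]
    rw [hx', ← mul_div_assoc, mul_div_cancel_left₀ _ (ne_of_gt hcnorm)] at hfinal
    linarith
  -- Step 2 : zero Wronskian implies linear dependence
  by_cases hall : ∀ x, φ x = 0
  · exact ⟨1, 0, by simp, fun x => by simp [hall x]⟩
  · push_neg at hall
    obtain ⟨x₀, hx₀⟩ := hall
    refine ⟨-φ₂ x₀, φ x₀, fun hcc => hx₀ hcc.2, ?_⟩
    set pc : ℝ → ℂ := fun x => ((p x : ℂ))⁻¹ with hpcdef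
    set qc : ℝ → ℂ := fun x => (q x : ℂ) - z * w x with hqcdef
    set ψ : ℝ → ℂ := fun x => -φ₂ x₀ * φ x + φ x₀ * φ₂ x with hψdef
    set P : ℝ → ℂ := fun x => -φ₂ x₀ * ((p x : ℂ) * deriv φ x)
      + φ x₀ * ((p x : ℂ) * deriv φ₂ x) with hPdef
    have hψd : ∀ x, HasDerivAt ψ (pc x * P x) x := by
      intro x
      have h0 := ((hd h₁ x).const_mul (-φ₂ x₀)).add ((hd h₂ x).const_mul (φ x₀))
      have he : -φ₂ x₀ * deriv φ x + φ x₀ * deriv φ₂ x = pc x * P x := by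
        rw [hpcdef, hPdef]
        have h9 : ((p x : ℂ))⁻¹ * (p x : ℂ) = 1 := inv_mul_cancel₀ (hpz x)
        linear_combination (φ₂ x₀ * deriv φ x - φ x₀ * deriv φ₂ x) * h9
      rwa [he] at h0
    have hPd' : ∀ x, HasDerivAt P (qc x * ψ x) x := by
      intro x
      have h0 := ((hPd h₁ x).const_mul (-φ₂ x₀)).add ((hPd h₂ x).const_mul (φ x₀))
      have he : -φ₂ x₀ * ((q x - z * w x) * φ x) + φ x₀ * ((q x - z * w x) * φ₂ x)
          = qc x * ψ x := by
        rw [hqcdef, hψdef]; ring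
      rwa [he] at h0
    have hK1 : ∀ x, ‖pc x‖ ≤ max a⁻¹ (Q + ‖z‖ * B) := by
      intro x
      refine le_trans ?_ (le_max_left _ _)
      rw [hpcdef, norm_inv, Complex.norm_real, Real.norm_eq_abs,
        abs_of_pos (hp0 x)]
      exact inv_anti₀ ha (hpa x)
    have hK2 : ∀ x, ‖qc x‖ ≤ max a⁻¹ (Q + ‖z‖ * B) := by
      intro x
      refine le_trans ?_ (le_max_right _ _)
      rw [hqcdef]
      refine le_trans (norm_sub_le _ _) ?_
      rw [Complex.norm_real, Real.norm_eq_abs, norm_mul, Complex.norm_real, Real.norm_eq_abs,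
        abs_of_pos (lt_of_lt_of_le hb (hwb x))]
      exact add_le_add (hQ x) (mul_le_mul_of_nonneg_left (hwB x) (norm_nonneg z))
    have hψ0 : ψ x₀ = 0 := by rw [hψdef]; ring
    have hP0 : P x₀ = 0 := by
      rw [hPdef]
      have := hWx x₀
      rw [← hcdef] at this
      rw [hczero] at this
      linear_combination this
    intro x
    exact ode_zero pc qc _ hK1 hK2 ψ P hψd hPd' x₀ hψ0 hP0 x


end SLH

lemma sl_reflect {p q w : ℝ → ℝ} {z : ℂ} {φ : ℝ → ℂ} (h : IsSLSolutionC p q w z φ) :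
    IsSLSolutionC (fun x => p (-x)) (fun x => q (-x)) (fun x => w (-x)) z (fun x => φ (-x)) := by
  have hd : ∀ x, HasDerivAt φ (deriv φ x) x := fun x => (h.1.differentiable one_ne_zero x).hasDerivAt
  have hPd : ∀ x, HasDerivAt (fun y => (p y : ℂ) * deriv φ y)
      ((q x - z * w x) * φ x) x := by
    intro x
    have h1 : HasDerivAt (fun y => (p y : ℂ) * deriv φ y)
        (deriv (fun y => (p y : ℂ) * deriv φ y) x) x :=
      (h.2.1.differentiable one_ne_zero x).hasDerivAt
    have h2 : deriv (fun y => (p y : ℂ) * deriv φ y) x = (q x - z * w x) * φ x := by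
      have := h.2.2 x
      linear_combination -this
    rwa [h2] at h1
  have hneg : ∀ x : ℝ, HasDerivAt (fun y : ℝ => -y) (-1 : ℝ) x := fun x => hasDerivAt_neg x
  have hder : ∀ x, HasDerivAt (fun y => φ (-y)) (-deriv φ (-x)) x := by
    intro x
    have := (hd (-x)).scomp x (hneg x)
    simpa [neg_one_smul, Function.comp_def] using this
  have hderiv_eq : deriv (fun y => φ (-y)) = fun x => -deriv φ (-x) :=
    funext fun x => (hder x).deriv
  have hPeq : (fun x => ((p (-x) : ℝ) : ℂ) * deriv (fun y => φ (-y)) x)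
      = fun x => -(((p (-x) : ℝ) : ℂ) * deriv φ (-x)) := by
    funext x
    rw [hderiv_eq]
    ring
  refine ⟨h.1.comp contDiff_neg, ?_, ?_⟩
  · rw [hPeq]
    exact (h.2.1.comp contDiff_neg).neg
  · intro x
    have hPref : HasDerivAt (fun y => -(((p (-y) : ℝ) : ℂ) * deriv φ (-y)))
        ((q (-x) - z * w (-x)) * φ (-x)) x := by
      have := ((hPd (-x)).scomp x (hneg x)).neg
      simp [neg_one_smul, Function.comp_def] at this
      exact this
    have hde : deriv (fun y => ((p (-y) : ℝ) : ℂ) * deriv (fun t => φ (-t)) y) x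
        = (q (-x) - z * w (-x)) * φ (-x) := by
      rw [hPeq]
      exact hPref.deriv
    rw [hde]
    ring

/-- limit point property at `±∞`. -/
theorem limit_point (p q w : ℝ → ℝ)
    (hp : APplus p) (hw : APplus w) (hq : BohrAP q) (z : ℂ)
    (φ₁ φ₂ : ℝ → ℂ)
    (h₁ : IsSLSolutionC p q w z φ₁) (h₂ : IsSLSolutionC p q w z φ₂) :
    (IntegrableOn (fun x => ‖φ₁ x‖ ^ 2 * w x) (Set.Ici 0) →
     IntegrableOn (fun x => ‖φ₂ x‖ ^ 2 * w x) (Set.Ici 0) →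
      ∃ c₁ c₂ : ℂ, ¬(c₁ = 0 ∧ c₂ = 0) ∧ ∀ x : ℝ, c₁ * φ₁ x + c₂ * φ₂ x = 0) ∧
    (IntegrableOn (fun x => ‖φ₁ x‖ ^ 2 * w x) (Set.Iic 0) →
     IntegrableOn (fun x => ‖φ₂ x‖ ^ 2 * w x) (Set.Iic 0) →
      ∃ c₁ c₂ : ℂ, ¬(c₁ = 0 ∧ c₂ = 0) ∧ ∀ x : ℝ, c₁ * φ₁ x + c₂ * φ₂ x = 0) := by
  obtain ⟨a, ha, hpa⟩ := hp.pos_lb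
  obtain ⟨b, hb, hwb⟩ := hw.pos_lb
  obtain ⟨A, hA⟩ := hp.1.bounded
  obtain ⟨B, hB⟩ := hw.1.bounded
  obtain ⟨Q, hQ⟩ := hq.bounded
  have hpc : Continuous p := hp.1.1
  have hwc : Continuous w := hw.1.1
  have hqc : Continuous q := hq.1
  have hpA : ∀ x, p x ≤ A := fun x => le_trans (le_abs_self _) (hA x)
  have hwB : ∀ x, w x ≤ B := fun x => le_trans (le_abs_self _) (hB x)
  have hQ' : ∀ x, |q x| ≤ Q := fun x => hQ x
  constructor
  · intro hint₁ hint₂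
    exact SLH.half_line hpc hqc hwc ha hb hpa hpA hwb hwB hQ' h₁ h₂ hint₁ hint₂
  · intro hint₁ hint₂
    have hint₁' : IntegrableOn (fun x => ‖φ₁ (-x)‖ ^ 2 * w (-x)) (Set.Ici 0) := by
      rw [← (Measure.measurePreserving_neg (volume : Measure ℝ)).integrableOn_comp_preimage
          (Homeomorph.neg ℝ).measurableEmbedding] at hint₁
      simpa [Function.comp_def] using hint₁
    have hint₂' : IntegrableOn (fun x => ‖φ₂ (-x)‖ ^ 2 * w (-x)) (Set.Ici 0) := by
      rw [← (Measure.measurePreserving_neg (volume : Measure ℝ)).integrableOn_comp_preimage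
          (Homeomorph.neg ℝ).measurableEmbedding] at hint₂
      simpa [Function.comp_def] using hint₂
    obtain ⟨c₁, c₂, hcc, hdep⟩ := SLH.half_line (p := fun x => p (-x)) (q := fun x => q (-x))
      (w := fun x => w (-x)) (hpc.comp continuous_neg) (hqc.comp continuous_neg)
      (hwc.comp continuous_neg) ha hb (fun x => hpa (-x)) (fun x => hpA (-x))
      (fun x => hwb (-x)) (fun x => hwB (-x)) (fun x => hQ' (-x))
      (sl_reflect h₁) (sl_reflect h₂) hint₁' hint₂'
    refine ⟨c₁, c₂, hcc, fun x => ?_⟩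
    simpa using hdep (-x)
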